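/- Let M > 0, Λ > 0 and s ∈ (0,1] satisfy 9 s³ Λ M² < 1. Then the cubic P(·,s) has exactly two positive roots r₀ < r∞; they satisfy P'(r₀,s) < 0 and P'(r∞,s) > 0; moreover P(r,s) < 0 for all r ∈ (r₀,r∞) and P(r,s) > 0 for all r ∈ [0,r₀). -/

import Mathlib

noncomputable section

/-- The cubic polynomial `P(r,s) = sL/3*r^3 - r + 2sM` (case `Q = 0`). -/
def Pc (M Λ s r : ℝ) : ℝ := s * Λ / 3 * r ^ 3 - r + 2 * s * M

/-- Derivative of `Pc` with respect to `r`. -/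
def Pc' (M Λ s r : ℝ) : ℝ := s * Λ * r ^ 2 - 1

lemma Pc_sub (M Λ s x y : ℝ) :
    Pc M Λ s y - Pc M Λ s x = (y - x) * (s * Λ / 3 * (x ^ 2 + x * y + y ^ 2) - 1) := by
  unfold Pc; ring

lemma Pc_continuous (M Λ s : ℝ) : Continuous (Pc M Λ s) := by
  unfold Pc; fun_prop

set_option maxHeartbeats 2000000 in
/-- Case C₂ (Q = 0, Λ > 0, 9s³ΛM² < 1): exactly two positive roots with the stated
derivative and sign structure. -/
theorem root_structure_case_C2 (M Λ s : ℝ)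
    (hM : 0 < M) (hΛ : 0 < Λ) (hs0 : 0 < s) (hs1 : s ≤ 1)
    (h : 9 * s ^ 3 * Λ * M ^ 2 < 1) :
    ∃ r₀ rinf : ℝ, 0 < r₀ ∧ r₀ < rinf ∧
      Pc M Λ s r₀ = 0 ∧ Pc M Λ s rinf = 0 ∧
      (∀ r : ℝ, 0 < r → Pc M Λ s r = 0 → r = r₀ ∨ r = rinf) ∧
      Pc' M Λ s r₀ < 0 ∧ 0 < Pc' M Λ s rinf ∧
      (∀ r : ℝ, r₀ < r → r < rinf → Pc M Λ s r < 0) ∧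
      (∀ r : ℝ, 0 ≤ r → r < r₀ → 0 < Pc M Λ s r) := by
  have ha : 0 < s * Λ := mul_pos hs0 hΛ
  obtain ⟨rc, hrc_def⟩ : ∃ rc : ℝ, rc = Real.sqrt (1 / (s * Λ)) := ⟨_, rfl⟩
  have hrc_pos : 0 < rc := hrc_def ▸ Real.sqrt_pos.mpr (by positivity)
  have hrc2 : rc ^ 2 = 1 / (s * Λ) := hrc_def ▸ Real.sq_sqrt (by positivity)
  have hrc2' : s * Λ * rc ^ 2 = 1 := by rw [hrc2, mul_one_div_cancel ha.ne']
  -- value at the critical point is negative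
  have hPrc : Pc M Λ s rc < 0 := by
    have h1 : (3 * s * M) ^ 2 < rc ^ 2 := by
      rw [hrc2, lt_div_iff₀ ha]; nlinarith
    have h2 : 3 * s * M < rc := by
      nlinarith [h1, hrc_pos, mul_pos (mul_pos hs0 hM) (by norm_num : (0:ℝ) < 3)]
    have : Pc M Λ s rc = -2 / 3 * rc + 2 * s * M := by
      unfold Pc; nlinarith [hrc2']
    rw [this]; linarith
  have hP0 : 0 < Pc M Λ s 0 := by unfold Pc; nlinarith
  -- monotonicity
  have hdec : ∀ x y : ℝ, 0 ≤ x → x < y → y ≤ rc → Pc M Λ s y < Pc M Λ s x := by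
    intro x y hx hxy hy
    have hxrc : x < rc := hxy.trans_le hy
    have hy0 : 0 < y := lt_of_le_of_lt hx hxy
    have key : x ^ 2 + x * y + y ^ 2 < 3 * rc ^ 2 := by nlinarith [hrc_pos]
    have hfac : s * Λ / 3 * (x ^ 2 + x * y + y ^ 2) - 1 < 0 := by
      nlinarith [mul_lt_mul_of_pos_left key ha, hrc2']
    nlinarith [Pc_sub M Λ s x y, mul_neg_of_pos_of_neg (sub_pos.mpr hxy) hfac]
  have hinc : ∀ x y : ℝ, rc ≤ x → x < y → Pc M Λ s x < Pc M Λ s y := by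
    intro x y hx hxy
    have hx0 : 0 < x := lt_of_lt_of_le hrc_pos hx
    have key : 3 * rc ^ 2 < x ^ 2 + x * y + y ^ 2 := by nlinarith [hrc_pos]
    have hfac : 0 < s * Λ / 3 * (x ^ 2 + x * y + y ^ 2) - 1 := by
      nlinarith [mul_lt_mul_of_pos_left key ha, hrc2']
    nlinarith [Pc_sub M Λ s x y, mul_pos (sub_pos.mpr hxy) hfac]
  have hcont := Pc_continuous M Λ s
  -- root r₀ in [0, rc]
  obtain ⟨r₀, hr₀mem, hr₀⟩ : ∃ r₀ ∈ Set.Icc (0:ℝ) rc, Pc M Λ s r₀ = 0 := by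
    have := intermediate_value_Icc' hrc_pos.le hcont.continuousOn
      (a := 0) (b := rc) (show (0:ℝ) ∈ Set.Icc (Pc M Λ s rc) (Pc M Λ s 0) from ⟨hPrc.le, hP0.le⟩)
    obtain ⟨r₀, hm, he⟩ := this
    exact ⟨r₀, hm, he⟩
  have hr₀0 : 0 < r₀ := by
    rcases lt_or_eq_of_le hr₀mem.1 with h' | h'
    · exact h'
    · exfalso; rw [← h'] at hr₀; linarith
  have hr₀rc : r₀ < rc := by
    rcases lt_or_eq_of_le hr₀mem.2 with h' | h'
    · exact h'
    · exfalso; rw [h'] at hr₀; linarith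
  -- big R with positive value
  obtain ⟨R, hR_def⟩ : ∃ R : ℝ, R = rc + Real.sqrt (6 / (s * Λ)) := ⟨_, rfl⟩
  have hsq6 : 0 ≤ Real.sqrt (6 / (s * Λ)) := Real.sqrt_nonneg _
  have hsq6sq : Real.sqrt (6 / (s * Λ)) ^ 2 = 6 / (s * Λ) := Real.sq_sqrt (by positivity)
  have hRrc : rc < R := by
    have : 0 < Real.sqrt (6 / (s * Λ)) := Real.sqrt_pos.mpr (by positivity)
    rw [hR_def]; linarith
  have hPR : 0 < Pc M Λ s R := by
    have hR2 : 6 / (s * Λ) ≤ R ^ 2 := by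
      have expand : R ^ 2 = rc ^ 2 + 2 * rc * Real.sqrt (6 / (s * Λ)) + 6 / (s * Λ) := by
        rw [hR_def, add_sq, hsq6sq]
      rw [expand]
      have h2q : 0 ≤ 2 * rc * Real.sqrt (6 / (s * Λ)) := by positivity
      linarith [sq_nonneg rc]
    have hR2' : 2 ≤ s * Λ / 3 * R ^ 2 := by
      have h6 : 6 ≤ R ^ 2 * (s * Λ) := (div_le_iff₀ ha).mp hR2
      have e : s * Λ / 3 * R ^ 2 = R ^ 2 * (s * Λ) / 3 := by ring
      rw [e]; linarith
    have hRpos : 0 < R := lt_trans hrc_pos hRrc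
    have hfac : 0 < s * Λ / 3 * R ^ 2 - 1 := by linarith
    have heq : Pc M Λ s R = R * (s * Λ / 3 * R ^ 2 - 1) + 2 * s * M := by unfold Pc; ring
    rw [heq]
    have h1 := mul_pos hRpos hfac
    have h2 := mul_pos (mul_pos (by norm_num : (0:ℝ) < 2) hs0) hM
    linarith [h2, mul_assoc (2:ℝ) s M ▸ h2]
  -- root rinf in [rc, R]
  obtain ⟨rinf, hrimem, hri⟩ : ∃ r ∈ Set.Icc rc R, Pc M Λ s r = 0 := by
    have := intermediate_value_Icc hRrc.le hcont.continuousOn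
      (a := rc) (b := R) (show (0:ℝ) ∈ Set.Icc (Pc M Λ s rc) (Pc M Λ s R) from ⟨hPrc.le, hPR.le⟩)
    obtain ⟨r, hm, he⟩ := this
    exact ⟨r, hm, he⟩
  have hrirc : rc < rinf := by
    rcases lt_or_eq_of_le hrimem.1 with h' | h'
    · exact h'
    · exfalso; rw [← h'] at hri; linarith
  have hlt : r₀ < rinf := lt_trans hr₀rc hrirc
  -- sign on (r₀, rinf)
  have hneg : ∀ r : ℝ, r₀ < r → r < rinf → Pc M Λ s r < 0 := by
    intro r h1 h2
    rcases le_or_gt r rc with hle | hgt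
    · have := hdec r₀ r hr₀0.le h1 hle; linarith
    · rcases lt_trichotomy r rinf with h3 | h3 | h3
      · rcases le_or_gt rc r with h4 | h4
        · have := hinc r rinf h4 h3; linarith
        · linarith
      · linarith [h2, h3.le]
      · linarith
  -- sign on [0, r₀)
  have hposl : ∀ r : ℝ, 0 ≤ r → r < r₀ → 0 < Pc M Λ s r := by
    intro r h1 h2
    have := hdec r r₀ h1 h2 hr₀rc.le; linarith
  refine ⟨r₀, rinf, hr₀0, hlt, hr₀, hri, ?_, ?_, ?_, hneg, hposl⟩
  · -- uniqueness
    intro r hr hPr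
    rcases le_or_gt r rc with hle | hgt
    · left
      rcases lt_trichotomy r r₀ with h' | h' | h'
      · exfalso; have := hposl r hr.le h'; linarith
      · exact h'
      · exfalso
        have hrri : r < rinf := lt_of_le_of_lt hle hrirc
        have := hneg r h' hrri; linarith
    · right
      rcases lt_trichotomy r rinf with h' | h' | h'
      · exfalso; have := hneg r (lt_trans hr₀rc hgt) h'; linarith
      · exact h'
      · exfalso; have := hinc rinf r hrimem.1 h'; linarith
  · -- Pc' at r₀
    have : r₀ ^ 2 < rc ^ 2 := by nlinarith
    unfold Pc'; nlinarith [hrc2']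
  · -- Pc' at rinf
    have : rc ^ 2 < rinf ^ 2 := by nlinarith
    unfold Pc'; nlinarith [hrc2']
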